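/- Let w ∈ {0,1}ⁿ be such that M(w) = XᵀD(w)X is invertible, let β(w) = M(w)⁻¹ Xᵀ D(w) y be the weighted least squares solution, and let r_j(w) = y_j - x_jᵀβ(w). Then v(w + e_j) = v(w) + r_j(w)² / (1 + x_jᵀ M(w)⁻¹ x_j), where v(w) = ∑ᵢ wᵢ (yᵢ - xᵢᵀβ(w))² and e_j is the j-th standard basis vector (with w_j = 0). -/

import Mathlib

open Finset Matrix

/-- Weighted Gram matrix `M(w) = Xᵀ D(w) X`. -/
noncomputable def Mw {n d : ℕ} (X : Matrix (Fin n) (Fin d) ℝ) (w : Fin n → ℝ) :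
    Matrix (Fin d) (Fin d) ℝ :=
  Xᵀ * Matrix.diagonal w * X

/-- Weighted least squares solution `β(w) = M(w)⁻¹ Xᵀ D(w) y`. -/
noncomputable def betaW {n d : ℕ} (X : Matrix (Fin n) (Fin d) ℝ) (y : Fin n → ℝ)
    (w : Fin n → ℝ) : Fin d → ℝ :=
  (Mw X w)⁻¹ *ᵥ (Xᵀ *ᵥ (w * y))

/-- Weighted sum of squared residuals at the weighted LS solution. -/
noncomputable def vW {n d : ℕ} (X : Matrix (Fin n) (Fin d) ℝ) (y : Fin n → ℝ)
    (w : Fin n → ℝ) : ℝ :=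
  ∑ i, w i * (y i - (X *ᵥ betaW X y w) i) ^ 2

section aux

variable {n d : ℕ} (X : Matrix (Fin n) (Fin d) ℝ) (y : Fin n → ℝ) (w : Fin n → ℝ)

lemma Mw_transpose : (Mw X w)ᵀ = Mw X w := by
  simp [Mw, Matrix.transpose_mul, Matrix.mul_assoc]

lemma dp_transpose (u : Fin n → ℝ) (v : Fin d → ℝ) :
    (Xᵀ *ᵥ u) ⬝ᵥ v = u ⬝ᵥ (X *ᵥ v) := by
  rw [Matrix.dotProduct_mulVec, Matrix.mulVec_transpose]

lemma vecMulVec_mulVec' (x : Fin d → ℝ) (v : Fin d → ℝ) :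
    vecMulVec x x *ᵥ v = (x ⬝ᵥ v) • x := by
  ext k
  simp [Matrix.mulVec, Matrix.vecMulVec_apply, dotProduct, Finset.sum_mul,
    Pi.smul_apply, smul_eq_mul]
  congr 1; ext i; ring

lemma Mw_mulVec (v : Fin d → ℝ) : Mw X w *ᵥ v = Xᵀ *ᵥ (w * (X *ᵥ v)) := by
  rw [Mw, ← Matrix.mulVec_mulVec, ← Matrix.mulVec_mulVec]
  congr 1
  ext i
  simp [Matrix.mulVec, dotProduct, Matrix.diagonal]

lemma Mw_mulVec_betaW (hdet : IsUnit (Mw X w).det) :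
    Mw X w *ᵥ betaW X y w = Xᵀ *ᵥ (w * y) := by
  rw [betaW, Matrix.mulVec_mulVec, Matrix.mul_nonsing_inv _ hdet, Matrix.one_mulVec]

/-- `v(w) = ∑ wᵢ yᵢ² - b ⬝ β`. -/
lemma vW_eq (hdet : IsUnit (Mw X w).det) :
    vW X y w = (∑ i, w i * y i ^ 2) - (Xᵀ *ᵥ (w * y)) ⬝ᵥ betaW X y w := by
  set β := betaW X y w with hβ
  set z := X *ᵥ β with hz
  have key : (Xᵀ *ᵥ (w * y)) ⬝ᵥ β = (w * y) ⬝ᵥ z := dp_transpose X _ _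
  have key2 : (Xᵀ *ᵥ (w * y)) ⬝ᵥ β = (w * z) ⬝ᵥ z := by
    rw [← Mw_mulVec_betaW X y w hdet, Mw_mulVec, dp_transpose, ← hz]
  have expand : vW X y w = (∑ i, w i * y i ^ 2) - 2 * ((w * y) ⬝ᵥ z) + (w * z) ⬝ᵥ z := by
    rw [vW, dotProduct, dotProduct, ← hβ, ← hz, Finset.mul_sum,
      ← Finset.sum_sub_distrib, ← Finset.sum_add_distrib]
    apply Finset.sum_congr rfl
    intro i _
    simp only [Pi.mul_apply]
    ring
  rw [expand]
  linarith [key, key2]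

lemma update_sum (f : Fin n → ℝ → ℝ) (hj : w j = 0) (hf : ∀ i, f i 0 = 0) :
    ∑ i, f i (Function.update w j 1 i) = (∑ i, f i (w i)) + f j 1 := by
  have : ∀ i : Fin n, f i (Function.update w j 1 i)
      = f i (w i) + if i = j then f j 1 else 0 := by
    intro i
    rcases eq_or_ne i j with rfl | h
    · simp [Function.update_self, hj, hf]
    · simp [Function.update_of_ne h, h]
  rw [Finset.sum_congr rfl fun i _ => this i, Finset.sum_add_distrib,
    Finset.sum_ite_eq' Finset.univ j fun _ => f j 1]
  simp

end aux

theorem stmt_4 (n d : ℕ) (X : Matrix (Fin n) (Fin d) ℝ) (y : Fin n → ℝ)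
    (w : Fin n → ℝ) (j : Fin n)
    (hbin : ∀ i, w i = 0 ∨ w i = 1) (hj : w j = 0) (hM : (Mw X w).PosDef) :
    vW X y (Function.update w j 1) =
      vW X y w + (y j - (X *ᵥ betaW X y w) j) ^ 2 /
        (1 + X j ⬝ᵥ ((Mw X w)⁻¹ *ᵥ X j)) := by
  classical
  set M := Mw X w with hMdef
  set x : Fin d → ℝ := X j with hx
  set b : Fin d → ℝ := Xᵀ *ᵥ (w * y) with hb
  set β := betaW X y w with hβ
  set w' := Function.update w j 1 with hw'
  have hdet : IsUnit M.det := isUnit_iff_ne_zero.mpr (ne_of_gt hM.det_pos)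
  -- M⁻¹ is symmetric
  have hMinvT : M⁻¹ᵀ = M⁻¹ := by
    rw [Matrix.transpose_nonsing_inv, hMdef, Mw_transpose]
  set c : ℝ := x ⬝ᵥ (M⁻¹ *ᵥ x) with hc
  set a : ℝ := x ⬝ᵥ β with ha
  -- c ≥ 0
  have hMinv : M⁻¹.PosDef := hM.inv
  have hc0 : 0 ≤ c := by
    rcases eq_or_ne x 0 with h0 | h0
    · simp [hc, h0]
    · exact le_of_lt (by simpa [star_trivial] using hMinv.dotProduct_mulVec_pos h0)
  have h1c : (0:ℝ) < 1 + c := by linarith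
  -- M' = M + x xᵀ
  have hMup : Mw X w' = M + vecMulVec x x := by
    rw [hMdef, hw']
    ext k l
    have e : ∀ v : Fin n → ℝ, Mw X v k l = ∑ i, X i k * v i * X i l := by
      intro v
      simp [Mw, Matrix.mul_apply, Matrix.diagonal, Finset.sum_mul]
    simp only [Matrix.add_apply, Matrix.vecMulVec_apply]
    rw [e, e]
    have h := update_sum w (j := j) (fun i t => X i k * t * X i l) hj (by intro i; ring)
    beta_reduce at h
    rw [h]
    ring
  have hM'pos : (Mw X w').PosDef := by
    rw [hMup]
    refine hM.add_posSemidef ?_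
    refine Matrix.PosSemidef.of_dotProduct_mulVec_nonneg ?_ ?_
    · unfold Matrix.IsHermitian
      ext k l
      simp [Matrix.conjTranspose_apply, Matrix.vecMulVec_apply, mul_comm]
    · intro z
      have : (star z) ⬝ᵥ (vecMulVec x x *ᵥ z) = (x ⬝ᵥ z) ^ 2 := by
        rw [vecMulVec_mulVec', dotProduct_smul]
        simp [star_trivial, dotProduct_comm, smul_eq_mul, sq]
      rw [this]
      positivity
  have hdet' : IsUnit (Mw X w').det := isUnit_iff_ne_zero.mpr (ne_of_gt hM'pos.det_pos)
  -- b' = b + y j • x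
  have hbup : Xᵀ *ᵥ (w' * y) = b + (y j) • x := by
    rw [hb, hw', hx]
    ext k
    have e : ∀ v : Fin n → ℝ, (Xᵀ *ᵥ (v * y)) k = ∑ i, X i k * (v i * y i) := by
      intro v
      simp [Matrix.mulVec, dotProduct, Matrix.transpose_apply]
    simp only [Pi.add_apply, Pi.smul_apply, smul_eq_mul]
    rw [e, e]
    have h := update_sum w (j := j) (fun i t => X i k * (t * y i)) hj (by intro i; ring)
    beta_reduce at h
    rw [h]
    ring
  set t : ℝ := (y j - a) / (1 + c) with ht
  -- β' = β + t • M⁻¹ x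
  have hβ' : betaW X y w' = β + t • (M⁻¹ *ᵥ x) := by
    have hMv : Mw X w' *ᵥ (β + t • (M⁻¹ *ᵥ x)) = b + (y j) • x := by
      rw [hMup, Matrix.add_mulVec, Matrix.mulVec_add, Matrix.mulVec_add,
        Matrix.mulVec_smul, Matrix.mulVec_smul]
      have h1 : M *ᵥ β = b := Mw_mulVec_betaW X y w hdet
      have h2 : M *ᵥ (M⁻¹ *ᵥ x) = x := by
        rw [Matrix.mulVec_mulVec, Matrix.mul_nonsing_inv _ hdet, Matrix.one_mulVec]
      have h3 : vecMulVec x x *ᵥ β = a • x := by rw [vecMulVec_mulVec', ha]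
      have h4 : vecMulVec x x *ᵥ (M⁻¹ *ᵥ x) = c • x := by rw [vecMulVec_mulVec', hc]
      rw [h1, h2, h3, h4]
      have hne : (1:ℝ) + c ≠ 0 := ne_of_gt h1c
      have h5 : t + a + t * c = y j := by
        rw [ht]; field_simp; ring
      ext k
      simp only [Pi.add_apply, Pi.smul_apply, smul_eq_mul]
      linear_combination (x k) * h5
    rw [betaW, hbup, ← hMv, Matrix.mulVec_mulVec,
      Matrix.nonsing_inv_mul _ hdet', Matrix.one_mulVec]
  -- symmetry: b ⬝ M⁻¹ x = a
  have hsym : b ⬝ᵥ (M⁻¹ *ᵥ x) = a := by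
    rw [Matrix.dotProduct_mulVec, ← Matrix.mulVec_transpose, hMinvT]
    have : M⁻¹ *ᵥ b = β := rfl
    rw [this, ha, dotProduct_comm]
  -- residual at j
  have hres : (X *ᵥ β) j = a := by
    rw [ha, hx]; rfl
  -- sums of squares
  have hS : ∑ i, w' i * y i ^ 2 = (∑ i, w i * y i ^ 2) + y j ^ 2 := by
    have := update_sum w (j := j) (fun i s => s * y i ^ 2) hj (by intro i; ring)
    rw [hw', this]; ring
  have hne : (1:ℝ) + c ≠ 0 := ne_of_gt h1c
  have expand2 : (b + y j • x) ⬝ᵥ (β + t • (M⁻¹ *ᵥ x)) =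
      b ⬝ᵥ β + t * a + y j * a + y j * (t * c) := by
    simp only [dotProduct_add, add_dotProduct, smul_dotProduct,
      dotProduct_smul, smul_eq_mul, hsym]
    rw [← ha, ← hc]
    ring
  rw [vW_eq X y w' hdet', vW_eq X y w hdet, hβ', hbup, hS, hres, expand2, ← hb, ← hβ, ht]
  field_simp
  ring
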